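/- Suppose the sequence of graphs {G(t)} is B-strongly connected for some B ≥ 1, and Assumptions 1 and 3 hold. If {b_t} is a nonincreasing positive scalar sequence such that Σ_{t=1}^∞ b_t a_t ‖f_i(z_i(t+1)) + r_t ψ_i(z_i(t+1))‖_1 < ∞ for every i ∈ [n] (where ‖·‖_1 is the l¹-norm on ℝ^d), then Σ_{t=0}^∞ b_t ‖z_i(t+1) − x̄(t)‖ < ∞ for every i ∈ [n]. -/

import Mathlib

open Finset

variable {n : ℕ}

/-- column-stochastic with nonneg entries -/
def IsCS (M : Matrix (Fin n) (Fin n) ℝ) : Prop :=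
  (∀ i j, 0 ≤ M i j) ∧ ∀ j, ∑ i, M i j = 1

lemma IsCS.mul {M Q : Matrix (Fin n) (Fin n) ℝ} (hM : IsCS M) (hQ : IsCS Q) :
    IsCS (M * Q) := by
  constructor
  · intro i j
    rw [Matrix.mul_apply]
    exact Finset.sum_nonneg fun k _ => mul_nonneg (hM.1 i k) (hQ.1 k j)
  · intro j
    simp only [Matrix.mul_apply]
    rw [Finset.sum_comm]
    have : ∀ k, ∑ i, M i k * Q k j = Q k j := by
      intro k
      rw [← Finset.sum_mul, hM.2 k, one_mul]
    simp only [this, hQ.2 j]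

lemma IsCS.one : IsCS (1 : Matrix (Fin n) (Fin n) ℝ) := by
  constructor
  · intro i j
    by_cases h : i = j <;> simp [Matrix.one_apply, h]
  · intro j
    simp [Matrix.one_apply, Finset.sum_ite_eq]

lemma IsCS.entry_le_one {M : Matrix (Fin n) (Fin n) ℝ} (hM : IsCS M) (i j : Fin n) :
    M i j ≤ 1 := by
  calc M i j ≤ ∑ i', M i' j :=
    Finset.single_le_sum (fun k _ => hM.1 k j) (Finset.mem_univ i)
  _ = 1 := hM.2 j

section osc
variable (hn : 0 < n)

lemma univ_ne (hn : 0 < n) : (Finset.univ : Finset (Fin n)).Nonempty :=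
  ⟨⟨0, hn⟩, Finset.mem_univ _⟩

/-- oscillation of row i -/
noncomputable def rosc (hn : 0 < n) (M : Matrix (Fin n) (Fin n) ℝ) (i : Fin n) : ℝ :=
  Finset.univ.sup' (univ_ne hn) (M i) - Finset.univ.inf' (univ_ne hn) (M i)

lemma rosc_nonneg (M : Matrix (Fin n) (Fin n) ℝ) (i : Fin n) : 0 ≤ rosc hn M i := by
  unfold rosc
  rw [sub_nonneg]
  exact le_trans (Finset.inf'_le _ (Finset.mem_univ (⟨0, hn⟩ : Fin n)))
    (Finset.le_sup' _ (Finset.mem_univ (⟨0, hn⟩ : Fin n)))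

lemma sub_le_rosc (M : Matrix (Fin n) (Fin n) ℝ) (i j j' : Fin n) :
    M i j - M i j' ≤ rosc hn M i :=
  sub_le_sub (Finset.le_sup' _ (Finset.mem_univ j)) (Finset.inf'_le _ (Finset.mem_univ j'))

lemma rosc_le {M : Matrix (Fin n) (Fin n) ℝ} {i : Fin n} {C : ℝ}
    (h : ∀ j j', M i j - M i j' ≤ C) : rosc hn M i ≤ C := by
  obtain ⟨j, -, hj⟩ := Finset.exists_mem_eq_sup' (univ_ne hn) (M i)
  obtain ⟨j', -, hj'⟩ := Finset.exists_mem_eq_inf' (univ_ne hn) (M i)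
  unfold rosc
  rw [hj, hj']
  exact h j j'

lemma rosc_le_one {M : Matrix (Fin n) (Fin n) ℝ} (hM : IsCS M) (i : Fin n) :
    rosc hn M i ≤ 1 := by
  apply rosc_le hn
  intro j j'
  have h1 := hM.entry_le_one i j
  have h2 := hM.1 i j'
  linarith

/-- convex combination of row entries lies within osc of any entry -/
lemma abs_sub_combo_le_rosc {M : Matrix (Fin n) (Fin n) ℝ} (i : Fin n)
    (ν : Fin n → ℝ) (hν : ∀ k, 0 ≤ ν k) (hν1 : ∑ k, ν k = 1) (j : Fin n) :
    |M i j - ∑ k, ν k * M i k| ≤ rosc hn M i := by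
  have key : ∀ j₀ : Fin n, M i j₀ - ∑ k, ν k * M i k ≤ rosc hn M i := by
    intro j₀
    have : M i j₀ - ∑ k, ν k * M i k = ∑ k, ν k * (M i j₀ - M i k) := by
      simp [mul_sub, Finset.sum_sub_distrib, ← Finset.sum_mul, hν1]
    rw [this]
    calc ∑ k, ν k * (M i j₀ - M i k) ≤ ∑ k, ν k * rosc hn M i :=
      Finset.sum_le_sum fun k _ =>
        mul_le_mul_of_nonneg_left (sub_le_rosc hn M i j₀ k) (hν k)
    _ = rosc hn M i := by rw [← Finset.sum_mul, hν1, one_mul]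
  rw [abs_sub_le_iff]
  refine ⟨key j, ?_⟩
  have : ∑ k, ν k * M i k - M i j = ∑ k, ν k * (M i k - M i j) := by
    simp [mul_sub, Finset.sum_sub_distrib, ← Finset.sum_mul, hν1]
  rw [this]
  calc ∑ k, ν k * (M i k - M i j) ≤ ∑ k, ν k * rosc hn M i :=
    Finset.sum_le_sum fun k _ =>
      mul_le_mul_of_nonneg_left (sub_le_rosc hn M i k j) (hν k)
  _ = rosc hn M i := by rw [← Finset.sum_mul, hν1, one_mul]

/-- contraction lemma -/
lemma rosc_mul_le {P Q : Matrix (Fin n) (Fin n) ℝ} (hQ : IsCS Q) {δ : ℝ} (hδ : 0 ≤ δ)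
    (hQδ : ∀ i j, δ ≤ Q i j) (i : Fin n) :
    rosc hn (P * Q) i ≤ (1 - n * δ) * rosc hn P i := by
  apply rosc_le hn
  intro j j'
  rw [Matrix.mul_apply, Matrix.mul_apply]
  obtain ⟨k₀, -, hk₀⟩ := Finset.exists_mem_eq_inf' (univ_ne hn) (P i)
  have h1 : ∑ k, P i k * Q k j - ∑ k, P i k * Q k j'
      = ∑ k, (Q k j - Q k j') * (P i k - Finset.univ.inf' (univ_ne hn) (P i)) := by
    simp only [sub_mul, mul_sub, Finset.sum_sub_distrib]
    rw [← Finset.sum_mul, ← Finset.sum_mul, hQ.2 j, hQ.2 j']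
    ring_nf
    congr 1 <;> apply Finset.sum_congr rfl <;> intros <;> ring
  rw [h1]
  have h2 : ∀ k, (Q k j - Q k j') * (P i k - Finset.univ.inf' (univ_ne hn) (P i))
      ≤ (Q k j - δ) * rosc hn P i := by
    intro k
    have hm : 0 ≤ P i k - Finset.univ.inf' (univ_ne hn) (P i) :=
      sub_nonneg.2 (Finset.inf'_le _ (Finset.mem_univ k))
    have hpos : P i k - Finset.univ.inf' (univ_ne hn) (P i) ≤ rosc hn P i := by
      unfold rosc
      have := Finset.le_sup' (P i) (Finset.mem_univ k)
      linarith [Finset.le_sup' (P i) (Finset.mem_univ k)]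
    rcases le_or_gt (Q k j - Q k j') 0 with h | h
    · calc (Q k j - Q k j') * (P i k - Finset.univ.inf' (univ_ne hn) (P i)) ≤ 0 :=
        mul_nonpos_of_nonpos_of_nonneg h hm
      _ ≤ (Q k j - δ) * rosc hn P i :=
        mul_nonneg (sub_nonneg.2 (hQδ k j)) (rosc_nonneg hn P i)
    · have hd : Q k j - Q k j' ≤ Q k j - δ := by linarith [hQδ k j']
      calc (Q k j - Q k j') * (P i k - Finset.univ.inf' (univ_ne hn) (P i))
          ≤ (Q k j - Q k j') * rosc hn P i := mul_le_mul_of_nonneg_left hpos h.le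
      _ ≤ (Q k j - δ) * rosc hn P i :=
        mul_le_mul_of_nonneg_right hd (rosc_nonneg hn P i)
  calc ∑ k, (Q k j - Q k j') * (P i k - Finset.univ.inf' (univ_ne hn) (P i))
      ≤ ∑ k, (Q k j - δ) * rosc hn P i := Finset.sum_le_sum fun k _ => h2 k
  _ = (1 - n * δ) * rosc hn P i := by
      rw [← Finset.sum_mul, Finset.sum_sub_distrib, hQ.2 j]
      simp [Finset.card_univ]

end osc

open Finset

set_option linter.unusedSectionVars false

section pushsum
variable {n B : ℕ} (E : ℕ → Finset (Fin n × Fin n)) (deg : ℕ → Fin n → ℕ)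


noncomputable def Amat (t : ℕ) : Matrix (Fin n) (Fin n) ℝ :=
  Matrix.of fun i j => if (j, i) ∈ E t then ((deg t j : ℝ))⁻¹ else 0

noncomputable def Pmat (s : ℕ) : ℕ → Matrix (Fin n) (Fin n) ℝ
  | 0 => 1
  | m+1 => Amat E deg (s + m) * Pmat s m

variable (hself : ∀ t i, (i, i) ∈ E t)
  (hdeg : ∀ t j, deg t j = (Finset.univ.filter (fun k => (j, k) ∈ E t)).card)

include hself hdeg

lemma deg_pos : ∀ t j, 0 < deg t j := by
  intro t j
  rw [hdeg]
  exact Finset.card_pos.2 ⟨j, Finset.mem_filter.2 ⟨Finset.mem_univ _, hself t j⟩⟩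

lemma deg_le : ∀ t j, deg t j ≤ n := by
  intro t j
  rw [hdeg]
  exact le_trans (Finset.card_filter_le _ _) (by simp)

lemma Amat_nonneg (t : ℕ) (i j : Fin n) : 0 ≤ Amat E deg t i j := by
  unfold Amat
  simp only [Matrix.of_apply]
  split
  · positivity
  · exact le_refl 0

lemma Amat_lb {t : ℕ} {i j : Fin n} (h : (j, i) ∈ E t) :
    ((n : ℝ))⁻¹ ≤ Amat E deg t i j := by
  unfold Amat
  simp only [Matrix.of_apply, if_pos h]
  have h1 : (0:ℝ) < deg t j := by exact_mod_cast deg_pos E deg hself hdeg t j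
  have h2 : (deg t j : ℝ) ≤ n := by exact_mod_cast deg_le E deg hself hdeg t j
  exact inv_anti₀ h1 h2

lemma Amat_diag_lb (t : ℕ) (i : Fin n) : ((n : ℝ))⁻¹ ≤ Amat E deg t i i :=
  Amat_lb E deg hself hdeg (hself t i)

lemma Amat_cs (t : ℕ) : IsCS (Amat E deg t) := by
  refine ⟨Amat_nonneg E deg hself hdeg t, fun j => ?_⟩
  unfold Amat
  simp only [Matrix.of_apply]
  rw [← Finset.sum_filter]
  rw [Finset.sum_const, ← hdeg]
  have h1 : (deg t j : ℝ) ≠ 0 := by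
    exact_mod_cast (deg_pos E deg hself hdeg t j).ne'
  rw [nsmul_eq_mul]
  field_simp



lemma Pmat_cs (s m : ℕ) : IsCS (Pmat E deg s m) := by
  induction m with
  | zero => exact IsCS.one
  | succ m ih => exact IsCS.mul (Amat_cs E deg hself hdeg (s + m)) ih

lemma Pmat_semigroup (s m : ℕ) : ∀ k, Pmat E deg s (m + k) = Pmat E deg (s + m) k * Pmat E deg s m := by
  intro k
  induction k with
  | zero => simp [Pmat]
  | succ k ih =>
    show Pmat E deg s ((m + k) + 1) = _
    rw [Pmat, ih, Pmat]
    rw [← Matrix.mul_assoc, Nat.add_assoc]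

lemma Pmat_pos_lb (s : ℕ) : ∀ m k j, Pmat E deg s m k j ≠ 0 →
    ((n : ℝ))⁻¹ ^ m ≤ Pmat E deg s m k j := by
  intro m
  induction m with
  | zero =>
    intro k j h
    rw [Pmat] at *
    by_cases hkj : k = j
    · subst hkj; simp [Matrix.one_apply]
    · simp [Matrix.one_apply, hkj] at h
  | succ m ih =>
    intro k j h
    rw [Pmat] at h ⊢
    rw [Matrix.mul_apply] at h ⊢
    obtain ⟨u, -, hu⟩ := Finset.exists_ne_zero_of_sum_ne_zero h
    have h1 : 0 < Amat E deg (s + m) k u * Pmat E deg s m u j := by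
      rcases (mul_ne_zero_iff.1 hu) with ⟨h2, h3⟩
      have := Amat_nonneg E deg hself hdeg (s+m) k u
      have := (Pmat_cs E deg hself hdeg s m).1 u j
      rcases lt_or_eq_of_le (Amat_nonneg E deg hself hdeg (s+m) k u) with h4 | h4
      · rcases lt_or_eq_of_le ((Pmat_cs E deg hself hdeg s m).1 u j) with h5 | h5
        · exact mul_pos h4 h5
        · exact absurd h5.symm h3
      · exact absurd h4.symm h2
    have hA : ((n:ℝ))⁻¹ ≤ Amat E deg (s + m) k u := by
      have h2 : Amat E deg (s+m) k u ≠ 0 := by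
        intro h0; rw [h0, zero_mul] at h1; exact lt_irrefl 0 h1
      unfold Amat at h2 ⊢
      simp only [Matrix.of_apply] at h2 ⊢
      by_cases he : (u, k) ∈ E (s + m)
      · have := Amat_lb E deg hself hdeg he
        unfold Amat at this
        simpa [he] using this
      · simp [he] at h2
    have hP : ((n:ℝ))⁻¹ ^ m ≤ Pmat E deg s m u j := by
      apply ih
      intro h0; rw [h0, mul_zero] at h1; exact lt_irrefl 0 h1
    calc ((n:ℝ))⁻¹ ^ (m+1) = (n:ℝ)⁻¹ * (n:ℝ)⁻¹ ^ m := by ring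
    _ ≤ Amat E deg (s + m) k u * Pmat E deg s m u j := by
        apply mul_le_mul hA hP (by positivity) (le_trans (by positivity) hA)
    _ ≤ ∑ u', Amat E deg (s + m) k u' * Pmat E deg s m u' j := by
        apply Finset.single_le_sum (fun u' _ => mul_nonneg (Amat_nonneg E deg hself hdeg (s+m) k u')
          ((Pmat_cs E deg hself hdeg s m).1 u' j)) (Finset.mem_univ u)


open Classical in
noncomputable def Ssup (s : ℕ) (j : Fin n) (m : ℕ) : Finset (Fin n) :=
  Finset.univ.filter (fun k => 0 < Pmat E deg s m k j)

omit hself hdeg in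
lemma mem_Ssup {s : ℕ} {j : Fin n} {m : ℕ} {k : Fin n} :
    k ∈ Ssup E deg s j m ↔ 0 < Pmat E deg s m k j := by
  classical
  simp [Ssup]

omit hself hdeg in
lemma self_mem_Ssup (s : ℕ) (j : Fin n) : j ∈ Ssup E deg s j 0 := by
  rw [mem_Ssup]
  show (0:ℝ) < (1 : Matrix (Fin n) (Fin n) ℝ) j j
  simp [Matrix.one_apply]

lemma Ssup_edge {s : ℕ} {j : Fin n} {m : ℕ} {u v : Fin n}
    (hu : u ∈ Ssup E deg s j m) (he : (u, v) ∈ E (s + m)) :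
    v ∈ Ssup E deg s j (m + 1) := by
  rw [mem_Ssup] at hu ⊢
  rw [Pmat, Matrix.mul_apply]
  have hn : 0 < n := v.pos
  have h1 : (0:ℝ) < Amat E deg (s + m) v u * Pmat E deg s m u j := by
    apply mul_pos _ hu
    calc (0:ℝ) < (n:ℝ)⁻¹ := by positivity
    _ ≤ _ := Amat_lb E deg hself hdeg he
  calc (0:ℝ) < Amat E deg (s + m) v u * Pmat E deg s m u j := h1
  _ ≤ _ := Finset.single_le_sum (fun u' _ => mul_nonneg
      (Amat_nonneg E deg hself hdeg (s+m) v u')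
      ((Pmat_cs E deg hself hdeg s m).1 u' j)) (Finset.mem_univ u)

lemma Ssup_step_mono {s : ℕ} {j : Fin n} {m : ℕ} :
    Ssup E deg s j m ⊆ Ssup E deg s j (m + 1) := fun k hk =>
  Ssup_edge E deg hself hdeg hk (hself (s + m) k)

lemma Ssup_mono {s : ℕ} {j : Fin n} {m m' : ℕ} (h : m ≤ m') :
    Ssup E deg s j m ⊆ Ssup E deg s j m' := by
  induction m' with
  | zero => rw [Nat.le_zero.1 h]
  | succ m' ih =>
    rcases Nat.lt_or_ge m (m' + 1) with h' | h'
    · exact (ih (Nat.lt_succ_iff.1 h')).trans (Ssup_step_mono E deg hself hdeg)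
    · rw [Nat.le_antisymm h h']

variable (hB : 1 ≤ B)
  (hconn : ∀ t : ℕ, ∀ i j : Fin n,
    Relation.ReflTransGen (fun u v => ∃ s, t ≤ s ∧ s < t + B ∧ (u, v) ∈ E s) i j)

include hconn

lemma Ssup_growth (s : ℕ) (j : Fin n) (m : ℕ) :
    Ssup E deg s j m = Finset.univ ∨
      (Ssup E deg s j m).card < (Ssup E deg s j (m + B)).card := by
  by_cases huniv : Ssup E deg s j m = Finset.univ
  · exact Or.inl huniv
  right
  by_contra hcard
  push_neg at hcard
  have hsub : Ssup E deg s j m ⊆ Ssup E deg s j (m + B) :=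
    Ssup_mono E deg hself hdeg (Nat.le_add_right m B)
  have heq : Ssup E deg s j (m + B) = Ssup E deg s j m :=
    (Finset.eq_of_subset_of_card_le hsub hcard).symm
  have hstable : ∀ m', m ≤ m' → m' ≤ m + B → Ssup E deg s j m' = Ssup E deg s j m := by
    intro m' h1 h2
    apply Finset.Subset.antisymm
    · exact heq ▸ Ssup_mono E deg hself hdeg h2
    · exact Ssup_mono E deg hself hdeg h1
  obtain ⟨k, hk⟩ : ∃ k, k ∉ Ssup E deg s j m := by
    by_contra hall
    push_neg at hall
    exact huniv (Finset.eq_univ_of_forall hall)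
  apply hk
  have hrtg := hconn (s + m) j k
  have hj0 : j ∈ Ssup E deg s j m :=
    Ssup_mono E deg hself hdeg (Nat.zero_le m) (self_mem_Ssup E deg s j)
  clear hk
  induction hrtg with
  | refl => exact hj0
  | tail h1 h2 ih =>
    obtain ⟨s', hs1, hs2, he⟩ := h2
    set m' := s' - s with hm'
    have hs' : s' = s + m' := by omega
    have hmm : m ≤ m' := by omega
    have hmB : m' + 1 ≤ m + B := by omega
    have hb : _ ∈ Ssup E deg s j m' := (hstable m' hmm (by omega)).symm ▸ ih
    have hc := Ssup_edge E deg hself hdeg hb (hs' ▸ he)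
    have := Ssup_mono E deg hself hdeg hmB hc
    rwa [hstable (m + B) (Nat.le_add_right m B) le_rfl] at this

lemma Ssup_univ (s : ℕ) (j : Fin n) : Ssup E deg s j (n * B) = Finset.univ := by
  have key : ∀ q, Ssup E deg s j (q * B) = Finset.univ ∨
      q + 1 ≤ (Ssup E deg s j (q * B)).card := by
    intro q
    induction q with
    | zero =>
      right
      simpa using Finset.card_pos.2 ⟨j, self_mem_Ssup E deg s j⟩
    | succ q ih =>
      rcases ih with h | h
      · left
        apply Finset.eq_univ_of_forall
        intro k
        apply Ssup_mono E deg hself hdeg (Nat.mul_le_mul_right B (Nat.le_succ q))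
        rw [h]
        exact Finset.mem_univ k
      · rcases Ssup_growth E deg hself hdeg hconn s j (q * B) with h2 | h2
        · left
          apply Finset.eq_univ_of_forall
          intro k
          apply Ssup_mono E deg hself hdeg (Nat.mul_le_mul_right B (Nat.le_succ q))
          rw [h2]
          exact Finset.mem_univ k
        · right
          have : q * B + B = (q + 1) * B := by ring
          rw [← this]
          omega
  rcases key n with h | h
  · exact h
  · apply Finset.eq_univ_of_card
    have := Finset.card_le_univ (Ssup E deg s j (n * B))
    simp only [Finset.card_univ, Fintype.card_fin] at *
    omega

/-- all entries of the `n*B`-step product are at least `(1/n)^(n*B)` -/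
lemma Pmat_block_lb (s : ℕ) (k j : Fin n) :
    ((n : ℝ))⁻¹ ^ (n * B) ≤ Pmat E deg s (n * B) k j := by
  have hk : k ∈ Ssup E deg s j (n * B) := by
    rw [Ssup_univ E deg hself hdeg hconn]
    exact Finset.mem_univ k
  rw [mem_Ssup] at hk
  exact Pmat_pos_lb E deg hself hdeg s (n * B) k j hk.ne'

end pushsum

lemma eucl_sum_apply {d : ℕ} {α : Type*} (s : Finset α) (g : α → EuclideanSpace ℝ (Fin d))
    (l : Fin d) : (∑ j ∈ s, g j) l = ∑ j ∈ s, g j l := by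
  induction s using Finset.cons_induction with
  | empty => simp
  | cons a s ha ih => rw [Finset.sum_cons, Finset.sum_cons, ← ih]; rfl

lemma eucl_norm_le_sum_abs {d : ℕ} (v : EuclideanSpace ℝ (Fin d)) :
    ‖v‖ ≤ ∑ l, |v l| := by
  rw [EuclideanSpace.norm_eq]
  have h1 : ∑ l, ‖v l‖ ^ 2 ≤ (∑ l, |v l|) ^ 2 := by
    simp only [Real.norm_eq_abs]
    exact Finset.sum_sq_le_sq_sum_of_nonneg (fun l _ => abs_nonneg _)
  calc √(∑ l, ‖v l‖ ^ 2) ≤ √((∑ l, |v l|) ^ 2) := Real.sqrt_le_sqrt h1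
  _ = ∑ l, |v l| := Real.sqrt_sq (Finset.sum_nonneg fun l _ => abs_nonneg _)

lemma geo_natdiv_le {c : ℝ} (hc0 : 0 < c) (hc1 : c < 1) {K : ℕ} (hK : 0 < K) (m : ℕ) :
    c ^ ((m + 1) / K) ≤ c⁻¹ * (c ^ ((K : ℝ)⁻¹)) ^ m := by
  set lam : ℝ := c ^ ((K : ℝ)⁻¹) with hlam
  have hKpos : (0:ℝ) < (K:ℝ) := by exact_mod_cast hK
  have hd : (m : ℝ) / (K : ℝ) - 1 ≤ (((m + 1) / K : ℕ) : ℝ) := by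
    have h1 := Nat.div_add_mod (m + 1) K
    have h2 := Nat.mod_lt (m + 1) hK
    have h3 : ((m:ℝ) + 1) = (K:ℝ) * (((m+1)/K : ℕ) : ℝ) + (((m+1) % K : ℕ) : ℝ) := by
      exact_mod_cast h1.symm
    have h4 : (((m+1) % K : ℕ) : ℝ) < (K:ℝ) := by exact_mod_cast h2
    rw [sub_le_iff_le_add, div_le_iff₀ hKpos]
    nlinarith
  have h3 : c ^ ((m + 1) / K) = c ^ ((((m+1)/K : ℕ)) : ℝ) := (Real.rpow_natCast _ _).symm
  rw [h3]
  have h4 : c ^ ((((m+1)/K : ℕ)) : ℝ) ≤ c ^ ((m : ℝ) / (K : ℝ) - 1) :=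
    Real.rpow_le_rpow_of_exponent_ge hc0 hc1.le hd
  refine h4.trans (le_of_eq ?_)
  rw [Real.rpow_sub hc0, Real.rpow_one, div_eq_mul_inv (c ^ ((m:ℝ)/(K:ℝ))), mul_comm]
  congr 1
  rw [hlam, ← Real.rpow_natCast (c ^ ((K:ℝ)⁻¹)) m, ← Real.rpow_mul hc0.le]
  congr 1
  rw [div_eq_mul_inv, mul_comm]

lemma geo_natdiv_summable {c : ℝ} (hc0 : 0 < c) (hc1 : c < 1) {K : ℕ} (hK : 0 < K) :
    Summable (fun m : ℕ => c ^ ((m + 1) / K)) := by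
  have hlam0 : 0 ≤ c ^ ((K : ℝ)⁻¹) := Real.rpow_nonneg hc0.le _
  have hlam1 : c ^ ((K : ℝ)⁻¹) < 1 := by
    apply Real.rpow_lt_one hc0.le hc1
    have : (0:ℝ) < (K:ℝ) := by exact_mod_cast hK
    positivity
  exact Summable.of_nonneg_of_le (fun m => by positivity)
    (fun m => geo_natdiv_le hc0 hc1 hK m)
    ((summable_geometric_of_lt_one hlam0 hlam1).mul_left c⁻¹)

section extra
open Finset
variable {n B : ℕ} (E : ℕ → Finset (Fin n × Fin n)) (deg : ℕ → Fin n → ℕ)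
  (hself : ∀ t i, (i, i) ∈ E t)
  (hdeg : ∀ t j, deg t j = (Finset.univ.filter (fun k => (j, k) ∈ E t)).card)

include hself hdeg in
lemma Pmat_diag_lb (s : ℕ) : ∀ m (j : Fin n), ((n:ℝ))⁻¹ ^ m ≤ Pmat E deg s m j j := by
  intro m
  induction m with
  | zero => intro j; simp [Pmat, Matrix.one_apply]
  | succ m ih =>
    intro j
    rw [Pmat, Matrix.mul_apply]
    calc ((n:ℝ))⁻¹ ^ (m+1) = (n:ℝ)⁻¹ * (n:ℝ)⁻¹ ^ m := by ring
    _ ≤ Amat E deg (s + m) j j * Pmat E deg s m j j := by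
        apply mul_le_mul (Amat_diag_lb E deg hself hdeg (s+m) j) (ih j) (by positivity)
        exact le_trans (by positivity) (Amat_diag_lb E deg hself hdeg (s+m) j)
    _ ≤ ∑ u, Amat E deg (s + m) j u * Pmat E deg s m u j :=
        Finset.single_le_sum (fun u _ => mul_nonneg
          (Amat_nonneg E deg hself hdeg (s+m) j u)
          ((Pmat_cs E deg hself hdeg s m).1 u j)) (Finset.mem_univ j)

lemma mulVec_finsum {α : Type*} (M : Matrix (Fin n) (Fin n) ℝ) (s : Finset α)
    (v : α → Fin n → ℝ) : M.mulVec (∑ j ∈ s, v j) = ∑ j ∈ s, M.mulVec (v j) := by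
  rw [← Matrix.mulVecLin_apply, map_sum]
  simp [Matrix.mulVecLin_apply]

lemma cs_mulVec_sum {M : Matrix (Fin n) (Fin n) ℝ} (hM : IsCS M) (v : Fin n → ℝ) :
    ∑ j, M.mulVec v j = ∑ k, v k := by
  show ∑ j, ∑ k, M j k * v k = ∑ k, v k
  rw [Finset.sum_comm]
  apply Finset.sum_congr rfl
  intro k _
  rw [← Finset.sum_mul, hM.2 k, one_mul]

include hself hdeg in
lemma rosc_Pmat_le (hn : 0 < n) (hB : 1 ≤ B)
    (hconn : ∀ t : ℕ, ∀ i j : Fin n,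
      Relation.ReflTransGen (fun u v => ∃ s, t ≤ s ∧ s < t + B ∧ (u, v) ∈ E s) i j)
    (s m : ℕ) (i : Fin n) :
    rosc hn (Pmat E deg s m) i ≤ (1 - n * ((n:ℝ)⁻¹ ^ (n*B))) ^ (m / (n*B)) := by
  set c : ℝ := 1 - n * ((n:ℝ)⁻¹ ^ (n*B)) with hc
  have hK : 0 < n * B := Nat.mul_pos hn hB
  have hc0 : 0 ≤ c := by
    rw [hc]
    have h1 : ((n:ℝ))⁻¹ ^ (n*B) ≤ (n:ℝ)⁻¹ ^ 1 := by
      apply pow_le_pow_of_le_one (by positivity) _ hK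
      rw [inv_le_one_iff₀]
      right
      exact_mod_cast hn
    have h2 : (n:ℝ) * (n:ℝ)⁻¹ = 1 := by
      field_simp
    nlinarith [show (0:ℝ) < (n:ℝ) by exact_mod_cast hn]
  have key : ∀ q k s', rosc hn (Pmat E deg s' (n*B*q + k)) i ≤ c ^ q := by
    intro q
    induction q with
    | zero =>
      intro k s'
      simpa using rosc_le_one hn (Pmat_cs E deg hself hdeg s' (0 + k)) i
    | succ q ih =>
      intro k s'
      have hidx : n*B*(q+1) + k = (n*B) + (n*B*q + k) := by ring
      rw [hidx, Pmat_semigroup E deg hself hdeg s' (n*B) (n*B*q + k)]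
      calc rosc hn (Pmat E deg (s' + n*B) (n*B*q + k) * Pmat E deg s' (n*B)) i
          ≤ (1 - n * ((n:ℝ)⁻¹ ^ (n*B))) * rosc hn (Pmat E deg (s' + n*B) (n*B*q + k)) i := by
            apply rosc_mul_le hn (Pmat_cs E deg hself hdeg s' (n*B)) (by positivity)
            exact fun i' j' => Pmat_block_lb E deg hself hdeg hconn s' i' j'
      _ ≤ c * c ^ q := by
            rw [← hc]
            exact mul_le_mul_of_nonneg_left (ih k (s' + n*B)) hc0
      _ = c ^ (q + 1) := by ring
  have hmod := Nat.div_add_mod m (n*B)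
  calc rosc hn (Pmat E deg s m) i
      = rosc hn (Pmat E deg s (n*B * (m / (n*B)) + m % (n*B))) i := by rw [hmod]
  _ ≤ c ^ (m / (n*B)) := key (m / (n*B)) (m % (n*B)) s

end extra


/-- The penalty kernel `g(u) = log((e^u + e^{-u})/2)` for `u > 0`, `g(u) = 0` for `u ≤ 0`. -/
noncomputable def penaltyKernel (u : ℝ) : ℝ :=
  if 0 < u then Real.log ((Real.exp u + Real.exp (-u)) / 2) else 0

/-- Weighted summability of consensus errors: under `B`-strong connectivity and
Assumptions 1 and 3, if `{b_t}` is a nonincreasing positive sequence with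
`Σ_t b_t a_t ‖f_i(z_i(t+1)) + r_t ψ_i(z_i(t+1))‖₁ < ∞` for every `i`, then
`Σ_t b_t ‖z_i(t+1) − x̄(t)‖ < ∞` for every `i`. -/
theorem pushsum_weighted_consensus_summable
    (n d B : ℕ) (hn : 1 ≤ n) (hd : 1 ≤ d) (hB : 1 ≤ B)
    (E : ℕ → Finset (Fin n × Fin n))
    (hself : ∀ t i, (i, i) ∈ E t)
    -- B-strong connectivity
    (hconn : ∀ t : ℕ, ∀ i j : Fin n,
      Relation.ReflTransGen (fun u v => ∃ s, t ≤ s ∧ s < t + B ∧ (u, v) ∈ E s) i j)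
    (F c : Fin n → EuclideanSpace ℝ (Fin d) → ℝ)
    (hFdiff : ∀ i, Differentiable ℝ (F i)) (hFconv : ∀ i, ConvexOn ℝ Set.univ (F i))
    (hcdiff : ∀ i, Differentiable ℝ (c i)) (hcconv : ∀ i, ConvexOn ℝ Set.univ (c i))
    (f ψ : Fin n → EuclideanSpace ℝ (Fin d) → EuclideanSpace ℝ (Fin d))
    (hf : ∀ i, f i = gradient (F i))
    (hψ : ∀ i, ψ i = gradient (fun zz => penaltyKernel (c i zz)))
    -- Assumption 1: uniformly bounded gradients
    (L K : ℝ) (hL : ∀ i zz, ‖f i zz‖ ≤ L) (hK : ∀ i zz, ‖gradient (c i) zz‖ ≤ K)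
    -- Assumption 3: step sizes and penalty parameters
    (a r : ℕ → ℝ) (ha0 : ∀ t, 0 ≤ a t) (hamono : ∀ s t, s ≤ t → a t ≤ a s)
    (hadiv : ¬ Summable a)
    (hr1 : ∀ t, 1 ≤ r t) (hrinf : Filter.Tendsto r Filter.atTop Filter.atTop)
    (har : Summable (fun t => a t ^ 2 * r t ^ 3))
    (hro : Filter.Tendsto (fun t => (r (t + 1) - r t) / a t) Filter.atTop (nhds 0))
    -- the penalty-based push-sum algorithm
    (deg : ℕ → Fin n → ℕ)
    (hdeg : ∀ t j, deg t j = (Finset.univ.filter (fun k => (j, k) ∈ E t)).card)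
    (x w z : ℕ → Fin n → EuclideanSpace ℝ (Fin d)) (y : ℕ → Fin n → ℝ)
    (hy0 : ∀ i, y 0 i = 1)
    (hw : ∀ t i, w (t + 1) i
      = ∑ j ∈ Finset.univ.filter (fun j => (j, i) ∈ E t), ((deg t j : ℝ))⁻¹ • x t j)
    (hy : ∀ t i, y (t + 1) i
      = ∑ j ∈ Finset.univ.filter (fun j => (j, i) ∈ E t), ((deg t j : ℝ))⁻¹ * y t j)
    (hz : ∀ t i, z (t + 1) i = (y (t + 1) i)⁻¹ • w (t + 1) i)
    (hx : ∀ t i, x (t + 1) i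
      = w (t + 1) i - a t • (f i (z (t + 1) i) + r t • ψ i (z (t + 1) i)))
    (xbar : ℕ → EuclideanSpace ℝ (Fin d))
    (hxbar : ∀ t, xbar t = (n : ℝ)⁻¹ • ∑ i, x t i)
    -- the weight sequence b
    (b : ℕ → ℝ) (hbpos : ∀ t, 0 < b t) (hbmono : ∀ s t, s ≤ t → b t ≤ b s)
    (hbsum : ∀ i, Summable (fun t =>
      b t * a t * ∑ k, |(f i (z (t + 1) i) + r t • ψ i (z (t + 1) i)) k|)) :
    ∀ i, Summable (fun t => b t * ‖z (t + 1) i - xbar t‖) := by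
  intro i
  rcases Nat.lt_or_ge n 2 with hn1 | hn2
  -- trivial case n = 1
  · have hn1' : n = 1 := by omega
    subst hn1'
    have hsub : ∀ k j : Fin 1, k = j := fun k j => Subsingleton.elim k j
    have hdeg1 : ∀ t (j : Fin 1), deg t j = 1 := by
      intro t j
      rw [hdeg]
      rw [Finset.filter_true_of_mem (fun k _ => (hsub k j) ▸ hself t j)]
      simp
    have hfilter : ∀ t (i' : Fin 1),
        (Finset.univ.filter (fun j => (j, i') ∈ E t)) = Finset.univ := by
      intro t i'
      exact Finset.filter_true_of_mem (fun k _ => (hsub k i') ▸ hself t i')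
    have h0 : (0 : Fin 1) = i := hsub 0 i
    have hy1 : ∀ t, y t i = 1 := by
      intro t
      induction t with
      | zero => exact hy0 i
      | succ t ih =>
        rw [hy, hfilter, Fin.sum_univ_one, hdeg1, h0, ih]
        norm_num
    have hzx : ∀ t, z (t + 1) i = x t i := by
      intro t
      rw [hz, hy1, hw, hfilter, Fin.sum_univ_one, hdeg1, h0]
      norm_num
    have hxb : ∀ t, xbar t = x t i := by
      intro t
      rw [hxbar, Fin.sum_univ_one, h0]
      norm_num
    apply Summable.congr summable_zero
    intro t
    rw [hzx, hxb, sub_self, norm_zero, mul_zero]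
  -- main case 2 ≤ n
  have hn0 : 0 < n := by omega
  set Knb : ℕ := n * B with hKnb_def
  have hKnb : 0 < Knb := Nat.mul_pos hn0 hB
  have hK2 : 2 ≤ Knb := le_trans (by omega) (Nat.mul_le_mul_left n hB)
  have hnR : (2:ℝ) ≤ (n:ℝ) := by exact_mod_cast hn2
  have hnR0 : (0:ℝ) < (n:ℝ) := by linarith
  set dl : ℝ := ((n:ℝ))⁻¹ ^ Knb with hdl_def
  have hdl0 : 0 < dl := by positivity
  set cc : ℝ := 1 - n * dl with hcc_def
  have hcc1 : cc < 1 := by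
    rw [hcc_def]
    nlinarith
  have hcc0 : 0 < cc := by
    rw [hcc_def]
    have h1 : ((n:ℝ))⁻¹ ^ Knb ≤ (n:ℝ)⁻¹ ^ 2 :=
      pow_le_pow_of_le_one (by positivity) (by rw [inv_le_one_iff₀]; right; linarith) hK2
    have h2 : (n:ℝ) * ((n:ℝ)⁻¹ ^ 2) = (n:ℝ)⁻¹ := by
      field_simp
    have h3 : (n:ℝ)⁻¹ ≤ 2⁻¹ := inv_anti₀ (by norm_num) hnR
    have h4 : (n:ℝ) * dl ≤ (n:ℝ)⁻¹ := by
      rw [hdl_def]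
      calc (n:ℝ) * ((n:ℝ))⁻¹ ^ Knb ≤ (n:ℝ) * ((n:ℝ)⁻¹ ^ 2) :=
        mul_le_mul_of_nonneg_left h1 hnR0.le
      _ = (n:ℝ)⁻¹ := h2
    linarith
  set u : ℕ → Fin d → Fin n → ℝ := fun t l j => x t j l with hu_def
  set e : ℕ → Fin d → Fin n → ℝ :=
    fun s l j => a s * ((f j (z (s+1) j) + r s • ψ j (z (s+1) j)) l) with he_def
  have Hwv : ∀ t (j : Fin n) l, w (t+1) j l = (Amat E deg t).mulVec (u t l) j := by
    intro t j l
    rw [hw]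
    rw [eucl_sum_apply]
    show _ = ∑ j', Amat E deg t j j' * u t l j'
    rw [Finset.sum_congr rfl (fun j' _ => (rfl : (((deg t j' : ℝ))⁻¹ • x t j') l = ((deg t j' : ℝ))⁻¹ * x t j' l))]
    rw [Finset.sum_filter]
    apply Finset.sum_congr rfl
    intro j' _
    unfold Amat
    simp only [Matrix.of_apply, ite_mul, zero_mul]
    rfl
  have Hrec : ∀ t l, u (t+1) l = (Amat E deg t).mulVec (u t l) - e t l := by
    intro t l
    funext j
    show x (t+1) j l = _
    rw [hx]
    have h1 : (w (t + 1) j - a t • (f j (z (t + 1) j) + r t • ψ j (z (t + 1) j))) l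
        = w (t+1) j l - a t * ((f j (z (t + 1) j) + r t • ψ j (z (t + 1) j)) l) := rfl
    rw [h1, Hwv t j l]
    rfl
  have Hclosed : ∀ t l, u t l = (Pmat E deg 0 t).mulVec (u 0 l)
      - ∑ s ∈ Finset.range t, (Pmat E deg (s+1) (t-1-s)).mulVec (e s l) := by
    intro t
    induction t with
    | zero =>
      intro l
      show u 0 l = (1 : Matrix (Fin n) (Fin n) ℝ).mulVec (u 0 l) - ∑ s ∈ Finset.range 0, _
      rw [Matrix.one_mulVec, Finset.range_zero, Finset.sum_empty, sub_zero]
    | succ t ih =>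
      intro l
      rw [Hrec t l, ih l, Matrix.mulVec_sub]
      rw [mulVec_finsum]
      rw [Matrix.mulVec_mulVec]
      have hP1 : Amat E deg t * Pmat E deg 0 t = Pmat E deg 0 (t+1) := by
        show _ = Amat E deg (0 + t) * Pmat E deg 0 t
        rw [Nat.zero_add]
      have hP2 : ∀ s ∈ Finset.range t,
          (Amat E deg t * Pmat E deg (s+1) (t-1-s)).mulVec (e s l)
          = (Pmat E deg (s+1) ((t+1)-1-s)).mulVec (e s l) := by
        intro s hs
        rw [Finset.mem_range] at hs
        have h1 : (t+1)-1-s = (t-1-s)+1 := by omega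
        rw [h1]
        show _ = (Amat E deg ((s+1) + (t-1-s)) * Pmat E deg (s+1) (t-1-s)).mulVec (e s l)
        have h2 : (s+1) + (t-1-s) = t := by omega
        rw [h2]
      rw [Finset.sum_congr rfl (fun s hs => by
        rw [Matrix.mulVec_mulVec, hP2 s hs])]
      rw [hP1, Finset.sum_range_succ]
      have h3 : (t+1)-1-t = 0 := by omega
      rw [h3]
      show _ = _ - (_ + (1 : Matrix (Fin n) (Fin n) ℝ).mulVec (e t l))
      rw [Matrix.one_mulVec]
      abel
  have Hw : ∀ t l, w (t+1) i l = (Pmat E deg 0 (t+1)).mulVec (u 0 l) i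
      - ∑ s ∈ Finset.range t, (Pmat E deg (s+1) (t-s)).mulVec (e s l) i := by
    intro t l
    have h1 : (Amat E deg t).mulVec (u t l) = u (t+1) l + e t l := by
      rw [Hrec t l]; abel
    rw [Hwv t i l, h1]
    have h2 := Hclosed (t+1) l
    rw [h2]
    show ((Pmat E deg 0 (t+1)).mulVec (u 0 l)
      - ∑ s ∈ Finset.range (t+1), (Pmat E deg (s+1) ((t+1)-1-s)).mulVec (e s l)) i
      + e t l i = _
    rw [Finset.sum_range_succ]
    have h3 : (t+1)-1-t = 0 := by omega
    rw [h3]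
    have h4 : ∀ s ∈ Finset.range t, (Pmat E deg (s+1) ((t+1)-1-s)).mulVec (e s l)
        = (Pmat E deg (s+1) (t-s)).mulVec (e s l) := by
      intro s hs
      rw [Finset.mem_range] at hs
      have : (t+1)-1-s = t-s := by omega
      rw [this]
    rw [Finset.sum_congr rfl h4]
    show ((Pmat E deg 0 (t+1)).mulVec (u 0 l)
      - (∑ s ∈ Finset.range t, (Pmat E deg (s+1) (t-s)).mulVec (e s l)
        + (1 : Matrix (Fin n) (Fin n) ℝ).mulVec (e t l))) i + e t l i = _
    rw [Matrix.one_mulVec]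
    simp only [Pi.sub_apply, Pi.add_apply, Finset.sum_apply]
    ring
  have Hy : ∀ t (j : Fin n), y t j = ∑ k, Pmat E deg 0 t j k := by
    intro t
    induction t with
    | zero =>
      intro j
      rw [hy0]
      show (1:ℝ) = ∑ k, (1 : Matrix (Fin n) (Fin n) ℝ) j k
      simp [Matrix.one_apply]
    | succ t ih =>
      intro j
      rw [hy t j]
      have h1 : ∀ j', j' ∈ Finset.univ.filter (fun j' => (j', j) ∈ E t) →
          ((deg t j' : ℝ))⁻¹ * y t j' = Amat E deg t j j' * y t j' := by
        intro j' hj'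
        rw [Finset.mem_filter] at hj'
        unfold Amat
        simp [hj'.2]
      rw [Finset.sum_congr rfl h1, Finset.sum_filter]
      have h2 : ∀ j', (if (j', j) ∈ E t then Amat E deg t j j' * y t j' else 0)
          = Amat E deg t j j' * y t j' := by
        intro j'
        by_cases hj' : (j', j) ∈ E t
        · rw [if_pos hj']
        · rw [if_neg hj']
          unfold Amat
          simp [hj']
      rw [Finset.sum_congr rfl (fun j' _ => h2 j')]
      have h3 : ∀ j', Amat E deg t j j' * y t j'
          = ∑ k, Amat E deg t j j' * Pmat E deg 0 t j' k := by
        intro j'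
        rw [ih j', Finset.mul_sum]
      rw [Finset.sum_congr rfl (fun j' _ => h3 j'), Finset.sum_comm]
      apply Finset.sum_congr rfl
      intro k _
      show _ = Pmat E deg 0 (t+1) j k
      show _ = (Amat E deg (0 + t) * Pmat E deg 0 t) j k
      rw [Nat.zero_add, Matrix.mul_apply]
  have Hypos : ∀ t (j : Fin n), 0 ≤ y t j := by
    intro t j
    rw [Hy]
    exact Finset.sum_nonneg fun k _ => (Pmat_cs E deg hself hdeg 0 t).1 j k
  have Hysum : ∀ t, ∑ j, y t j = n := by
    intro t
    rw [Finset.sum_congr rfl (fun j _ => Hy t j)]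
    rw [show (∑ j : Fin n, ∑ k : Fin n, Pmat E deg 0 t j k) = ∑ k : Fin n, ∑ j : Fin n, Pmat E deg 0 t j k from Finset.sum_comm]
    rw [Finset.sum_congr rfl (fun k _ => (Pmat_cs E deg hself hdeg 0 t).2 k)]
    simp
  have Hysplit : ∀ s1 k1 (j : Fin n), y (s1 + k1) j
      = ∑ j', Pmat E deg s1 k1 j j' * y s1 j' := by
    intro s1 k1 j
    rw [Hy, Pmat_semigroup E deg hself hdeg 0 s1 k1]
    have h0 : 0 + s1 = s1 := Nat.zero_add s1
    rw [h0]
    rw [Finset.sum_congr rfl (fun k _ => Matrix.mul_apply)]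
    rw [Finset.sum_comm]
    apply Finset.sum_congr rfl
    intro j' _
    rw [Hy s1 j', Finset.mul_sum]
  have Hylb : ∀ t (j : Fin n), dl ≤ y t j := by
    intro t j
    rcases Nat.lt_or_ge t Knb with ht | ht
    · calc dl = ((n:ℝ))⁻¹ ^ Knb := hdl_def
      _ ≤ ((n:ℝ))⁻¹ ^ t := pow_le_pow_of_le_one (by positivity)
          (by rw [inv_le_one_iff₀]; right; linarith) ht.le
      _ ≤ Pmat E deg 0 t j j := Pmat_diag_lb E deg hself hdeg 0 t j
      _ ≤ ∑ k, Pmat E deg 0 t j k := Finset.single_le_sum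
          (fun k _ => (Pmat_cs E deg hself hdeg 0 t).1 j k) (Finset.mem_univ j)
      _ = y t j := (Hy t j).symm
    · have hidx : (t - Knb) + Knb = t := by omega
      have h1 := Hysplit (t - Knb) Knb j
      rw [hidx] at h1
      rw [h1]
      have h2 : ∀ j' : Fin n, dl * y (t - Knb) j' ≤ Pmat E deg (t - Knb) Knb j j' * y (t - Knb) j' := by
        intro j'
        exact mul_le_mul_of_nonneg_right
          (Pmat_block_lb E deg hself hdeg hconn (t - Knb) j j') (Hypos _ j')
      calc dl = dl * 1 := (mul_one dl).symm
      _ ≤ dl * (n:ℝ) := by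
          apply mul_le_mul_of_nonneg_left _ hdl0.le
          linarith
      _ = dl * ∑ j', y (t - Knb) j' := by rw [Hysum]
      _ = ∑ j', dl * y (t - Knb) j' := Finset.mul_sum _ _ _
      _ ≤ ∑ j', Pmat E deg (t - Knb) Knb j j' * y (t - Knb) j' :=
          Finset.sum_le_sum fun j' _ => h2 j'
  have Hosc : ∀ s m (i' : Fin n), rosc hn0 (Pmat E deg s m) i' ≤ cc ^ (m / Knb) :=
    fun s m i' => rosc_Pmat_le E deg hself hdeg hn0 hB hconn s m i'
  have Hxbarl : ∀ t l, xbar t l = (n:ℝ)⁻¹ * ∑ j, u t l j := by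
    intro t l
    rw [hxbar]
    show ((n : ℝ)⁻¹ • ∑ j, x t j) l = _
    have h1 : ((n : ℝ)⁻¹ • ∑ j, x t j) l = (n:ℝ)⁻¹ * (∑ j, x t j) l := rfl
    rw [h1, eucl_sum_apply]
  have Husum : ∀ t l, ∑ j, u t l j
      = ∑ j, u 0 l j - ∑ s ∈ Finset.range t, ∑ j, e s l j := by
    intro t l
    have h1 := Hclosed t l
    have h2 : ∑ j, u t l j = ∑ j, ((Pmat E deg 0 t).mulVec (u 0 l)
        - ∑ s ∈ Finset.range t, (Pmat E deg (s+1) (t-1-s)).mulVec (e s l)) j := by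
      rw [← h1]
    rw [h2]
    simp only [Pi.sub_apply, Finset.sum_apply]
    rw [Finset.sum_sub_distrib]
    congr 1
    · exact cs_mulVec_sum (Pmat_cs E deg hself hdeg 0 t) (u 0 l)
    · rw [Finset.sum_comm]
      apply Finset.sum_congr rfl
      intro s _
      exact cs_mulVec_sum (Pmat_cs E deg hself hdeg (s+1) (t-1-s)) (e s l)
  have Hpair : ∀ (M : Matrix (Fin n) (Fin n) ℝ) (μ : ℝ) (v : Fin n → ℝ) (C : ℝ),
      (∀ j, |M i j - μ| ≤ C) → (0 ≤ C) →
      |M.mulVec v i - μ * ∑ j, v j| ≤ C * ∑ j, |v j| := by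
    intro M μ v C hc hC0
    have h1 : M.mulVec v i - μ * ∑ j, v j = ∑ j, (M i j - μ) * v j := by
      show (∑ j, M i j * v j) - μ * ∑ j, v j = _
      rw [Finset.mul_sum, ← Finset.sum_sub_distrib]
      exact Finset.sum_congr rfl fun j _ => by ring
    rw [h1]
    calc |∑ j, (M i j - μ) * v j| ≤ ∑ j, |(M i j - μ) * v j| :=
        Finset.abs_sum_le_sum_abs _ _
    _ ≤ ∑ j, C * |v j| := Finset.sum_le_sum fun j _ => by
        rw [abs_mul]
        exact mul_le_mul_of_nonneg_right (hc j) (abs_nonneg _)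
    _ = C * ∑ j, |v j| := (Finset.mul_sum _ _ _).symm
  have Hcombo : ∀ (M : Matrix (Fin n) (Fin n) ℝ) (ν : Fin n → ℝ) (μ : ℝ),
      (∀ k, 0 ≤ ν k) → (∑ k, ν k = 1) → (μ = ∑ k, ν k * M i k) →
      ∀ j, |M i j - μ| ≤ rosc hn0 M i := by
    intro M ν μ h1 h2 h3 j
    rw [h3]
    exact abs_sub_combo_le_rosc hn0 i ν h1 h2 j
  have Hcoord : ∀ t l, |w (t+1) i l - y (t+1) i * xbar t l|
      ≤ cc ^ ((t+1) / Knb) * ∑ j, |u 0 l j|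
        + ∑ s ∈ Finset.range t, cc ^ ((t-s) / Knb) * ∑ j, |e s l j| := by
    intro t l
    have hXdef : w (t+1) i l - y (t+1) i * xbar t l
        = ((Pmat E deg 0 (t+1)).mulVec (u 0 l) i
            - (y (t+1) i * (n:ℝ)⁻¹) * ∑ j, u 0 l j)
          - ∑ s ∈ Finset.range t,
            ((Pmat E deg (s+1) (t-s)).mulVec (e s l) i
              - (y (t+1) i * (n:ℝ)⁻¹) * ∑ j, e s l j) := by
      rw [Hw t l, Hxbarl t l, Husum t l, Finset.sum_sub_distrib]
      rw [show (∑ s ∈ Finset.range t, (y (t+1) i * (n:ℝ)⁻¹) * ∑ j, e s l j)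
          = (y (t+1) i * (n:ℝ)⁻¹) * ∑ s ∈ Finset.range t, ∑ j, e s l j from
          (Finset.mul_sum _ _ _).symm]
      ring
    rw [hXdef]
    have hmu1 : y (t+1) i * (n:ℝ)⁻¹ = ∑ k, (n:ℝ)⁻¹ * Pmat E deg 0 (t+1) i k := by
      rw [Hy (t+1) i, Finset.sum_mul]
      exact Finset.sum_congr rfl fun k _ => mul_comm _ _
    have hbound1 : ∀ j, |Pmat E deg 0 (t+1) i j - y (t+1) i * (n:ℝ)⁻¹|
        ≤ cc ^ ((t+1) / Knb) := by
      intro j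
      refine le_trans (Hcombo (Pmat E deg 0 (t+1)) (fun _ => (n:ℝ)⁻¹) _
        (fun _ => by positivity) ?_ hmu1 j) (Hosc 0 (t+1) i)
      rw [Finset.sum_const, Finset.card_univ, Fintype.card_fin, nsmul_eq_mul]
      field_simp
    have hccpow0 : ∀ m : ℕ, (0:ℝ) ≤ cc ^ (m / Knb) := fun m => by positivity
    have hbound2 : ∀ s ∈ Finset.range t,
        |(Pmat E deg (s+1) (t-s)).mulVec (e s l) i
          - (y (t+1) i * (n:ℝ)⁻¹) * ∑ j, e s l j|
        ≤ cc ^ ((t-s) / Knb) * ∑ j, |e s l j| := by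
      intro s hs
      rw [Finset.mem_range] at hs
      apply Hpair _ _ _ _ _ (hccpow0 (t-s))
      intro j
      have hidx : (s+1) + (t-s) = t+1 := by omega
      have hys := Hysplit (s+1) (t-s) i
      rw [hidx] at hys
      have hmu2 : y (t+1) i * (n:ℝ)⁻¹
          = ∑ k, (y (s+1) k * (n:ℝ)⁻¹) * Pmat E deg (s+1) (t-s) i k := by
        rw [hys, Finset.sum_mul]
        exact Finset.sum_congr rfl fun k _ => by ring
      refine le_trans (Hcombo (Pmat E deg (s+1) (t-s))
        (fun k => y (s+1) k * (n:ℝ)⁻¹) _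
        (fun k => mul_nonneg (Hypos (s+1) k) (by positivity)) ?_ hmu2 j)
        (Hosc (s+1) (t-s) i)
      rw [← Finset.sum_mul, Hysum]
      field_simp
    calc |((Pmat E deg 0 (t+1)).mulVec (u 0 l) i
            - (y (t+1) i * (n:ℝ)⁻¹) * ∑ j, u 0 l j)
          - ∑ s ∈ Finset.range t,
            ((Pmat E deg (s+1) (t-s)).mulVec (e s l) i
              - (y (t+1) i * (n:ℝ)⁻¹) * ∑ j, e s l j)|
        ≤ |(Pmat E deg 0 (t+1)).mulVec (u 0 l) i
            - (y (t+1) i * (n:ℝ)⁻¹) * ∑ j, u 0 l j|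
          + |∑ s ∈ Finset.range t,
            ((Pmat E deg (s+1) (t-s)).mulVec (e s l) i
              - (y (t+1) i * (n:ℝ)⁻¹) * ∑ j, e s l j)| := abs_sub _ _
    _ ≤ cc ^ ((t+1) / Knb) * ∑ j, |u 0 l j|
          + ∑ s ∈ Finset.range t, cc ^ ((t-s) / Knb) * ∑ j, |e s l j| := by
        apply add_le_add
        · exact Hpair _ _ _ _ hbound1 (hccpow0 (t+1))
        · exact le_trans (Finset.abs_sum_le_sum_abs _ _)
            (Finset.sum_le_sum hbound2)
  set U0 : ℝ := ∑ l, ∑ j, |u 0 l j| with hU0_def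
  set ES : ℕ → ℝ := fun s => ∑ l, ∑ j, |e s l j| with hES_def
  have hU00 : 0 ≤ U0 := Finset.sum_nonneg fun l _ =>
    Finset.sum_nonneg fun j _ => abs_nonneg _
  have hES0 : ∀ s, 0 ≤ ES s := fun s => Finset.sum_nonneg fun l _ =>
    Finset.sum_nonneg fun j _ => abs_nonneg _
  have Hnorm : ∀ t, ‖z (t+1) i - xbar t‖
      ≤ dl⁻¹ * (cc ^ ((t+1) / Knb) * U0
        + ∑ s ∈ Finset.range t, cc ^ ((t-s) / Knb) * ES s) := by
    intro t
    have hyi := Hylb (t+1) i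
    have hyi0 : 0 < y (t+1) i := lt_of_lt_of_le hdl0 hyi
    have hcoord_eq : ∀ l, (z (t+1) i - xbar t) l
        = (y (t+1) i)⁻¹ * (w (t+1) i l - y (t+1) i * xbar t l) := by
      intro l
      have h1 : (z (t+1) i - xbar t) l = z (t+1) i l - xbar t l := rfl
      have h2 : z (t+1) i l = (y (t+1) i)⁻¹ * w (t+1) i l := by
        rw [hz]; rfl
      rw [h1, h2]
      field_simp
    calc ‖z (t+1) i - xbar t‖ ≤ ∑ l, |(z (t+1) i - xbar t) l| :=
        eucl_norm_le_sum_abs _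
    _ ≤ ∑ l, dl⁻¹ * |w (t+1) i l - y (t+1) i * xbar t l| := by
        apply Finset.sum_le_sum
        intro l _
        rw [hcoord_eq l, abs_mul, abs_of_nonneg (inv_nonneg.2 hyi0.le)]
        apply mul_le_mul_of_nonneg_right _ (abs_nonneg _)
        exact inv_anti₀ hdl0 hyi
    _ ≤ ∑ l, dl⁻¹ * (cc ^ ((t+1) / Knb) * ∑ j, |u 0 l j|
          + ∑ s ∈ Finset.range t, cc ^ ((t-s) / Knb) * ∑ j, |e s l j|) := by
        apply Finset.sum_le_sum
        intro l _
        exact mul_le_mul_of_nonneg_left (Hcoord t l) (by positivity)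
    _ = dl⁻¹ * (cc ^ ((t+1) / Knb) * U0
        + ∑ s ∈ Finset.range t, cc ^ ((t-s) / Knb) * ES s) := by
        rw [← Finset.mul_sum]
        congr 1
        rw [Finset.sum_add_distrib, ← Finset.mul_sum]
        congr 1
        rw [Finset.sum_comm]
        apply Finset.sum_congr rfl
        intro s _
        rw [← Finset.mul_sum]
  have HESb : Summable (fun s => b s * ES s) := by
    have h1 : ∀ s, b s * ES s = ∑ j, (b s * a s *
        ∑ l, |(f j (z (s+1) j) + r s • ψ j (z (s+1) j)) l|) := by
      intro s
      rw [hES_def]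
      simp only
      rw [Finset.sum_comm, Finset.mul_sum]
      apply Finset.sum_congr rfl
      intro j _
      rw [Finset.mul_sum, Finset.mul_sum]
      apply Finset.sum_congr rfl
      intro l _
      rw [he_def]
      simp only
      rw [abs_mul, abs_of_nonneg (ha0 s)]
      ring
    apply Summable.congr _ (fun s => (h1 s).symm)
    exact summable_sum fun j _ => hbsum j
  have hgeo : Summable (fun m : ℕ => cc ^ ((m + 1) / Knb)) :=
    geo_natdiv_summable hcc0 hcc1 hKnb
  set Sc : ℝ := ∑' m : ℕ, cc ^ ((m + 1) / Knb) with hSc_def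
  have hSc0 : 0 ≤ Sc := tsum_nonneg fun m => by positivity
  set Th : ℝ := ∑' s, b s * ES s with hTh_def
  have hTh0 : 0 ≤ Th := tsum_nonneg fun s => mul_nonneg (hbpos s).le (hES0 s)
  apply summable_of_sum_range_le
    (c := dl⁻¹ * (b 0 * U0 * Sc + Th * Sc))
    (fun t => mul_nonneg (hbpos t).le (norm_nonneg _))
  intro T
  have step1 : ∑ t ∈ Finset.range T, b t * ‖z (t+1) i - xbar t‖
      ≤ dl⁻¹ * ((∑ t ∈ Finset.range T, b t * (cc ^ ((t+1) / Knb) * U0))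
        + ∑ t ∈ Finset.range T, ∑ s ∈ Finset.range t,
            b t * (cc ^ ((t-s) / Knb) * ES s)) := by
    calc ∑ t ∈ Finset.range T, b t * ‖z (t+1) i - xbar t‖
        ≤ ∑ t ∈ Finset.range T, b t * (dl⁻¹ * (cc ^ ((t+1) / Knb) * U0
            + ∑ s ∈ Finset.range t, cc ^ ((t-s) / Knb) * ES s)) :=
        Finset.sum_le_sum fun t _ =>
          mul_le_mul_of_nonneg_left (Hnorm t) (hbpos t).le
    _ = dl⁻¹ * ((∑ t ∈ Finset.range T, b t * (cc ^ ((t+1) / Knb) * U0))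
        + ∑ t ∈ Finset.range T, ∑ s ∈ Finset.range t,
            b t * (cc ^ ((t-s) / Knb) * ES s)) := by
        rw [mul_add, Finset.mul_sum, Finset.mul_sum, ← Finset.sum_add_distrib]
        apply Finset.sum_congr rfl
        intro t _
        rw [show ∑ s ∈ Finset.range t, b t * (cc ^ ((t-s) / Knb) * ES s)
            = b t * ∑ s ∈ Finset.range t, cc ^ ((t-s) / Knb) * ES s from
          (Finset.mul_sum _ _ _).symm]
        ring
  have step2 : ∑ t ∈ Finset.range T, b t * (cc ^ ((t+1) / Knb) * U0)
      ≤ b 0 * U0 * Sc := by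
    calc ∑ t ∈ Finset.range T, b t * (cc ^ ((t+1) / Knb) * U0)
        ≤ ∑ t ∈ Finset.range T, b 0 * (cc ^ ((t+1) / Knb) * U0) := by
          apply Finset.sum_le_sum
          intro t _
          exact mul_le_mul_of_nonneg_right (hbmono 0 t (Nat.zero_le t))
            (mul_nonneg (by positivity) hU00)
    _ = b 0 * U0 * ∑ t ∈ Finset.range T, cc ^ ((t+1) / Knb) := by
          rw [Finset.mul_sum]
          exact Finset.sum_congr rfl fun t _ => by ring
    _ ≤ b 0 * U0 * Sc := by
        apply mul_le_mul_of_nonneg_left _ (mul_nonneg (hbpos 0).le hU00)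
        exact Summable.sum_le_tsum _ (fun m _ => by positivity) hgeo
  have step3 : ∑ t ∈ Finset.range T, ∑ s ∈ Finset.range t,
      b t * (cc ^ ((t-s) / Knb) * ES s) ≤ Th * Sc := by
    have hswap : ∑ t ∈ Finset.range T, ∑ s ∈ Finset.range t,
        b t * (cc ^ ((t-s) / Knb) * ES s)
        = ∑ s ∈ Finset.range T, ∑ t ∈ Finset.Ico (s+1) T,
            b t * (cc ^ ((t-s) / Knb) * ES s) := by
      apply Finset.sum_comm'
      intro t s
      simp only [Finset.mem_range, Finset.mem_Ico]
      omega
    rw [hswap]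
    have hinner : ∀ s ∈ Finset.range T, ∑ t ∈ Finset.Ico (s+1) T,
        b t * (cc ^ ((t-s) / Knb) * ES s) ≤ b s * ES s * Sc := by
      intro s _
      rw [Finset.sum_Ico_eq_sum_range]
      have h1 : ∀ m ∈ Finset.range (T - (s+1)),
          b (s+1+m) * (cc ^ (((s+1+m)-s) / Knb) * ES s)
          = b (s+1+m) * (cc ^ ((m+1) / Knb) * ES s) := by
        intro m _
        have hmm : (s+1+m)-s = m+1 := by omega
        rw [hmm]
      rw [Finset.sum_congr rfl h1]
      calc ∑ m ∈ Finset.range (T - (s+1)), b (s+1+m) * (cc ^ ((m+1) / Knb) * ES s)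
          ≤ ∑ m ∈ Finset.range (T - (s+1)), b s * (cc ^ ((m+1) / Knb) * ES s) := by
            apply Finset.sum_le_sum
            intro m _
            exact mul_le_mul_of_nonneg_right (hbmono s (s+1+m) (by omega))
              (mul_nonneg (by positivity) (hES0 s))
      _ = b s * ES s * ∑ m ∈ Finset.range (T - (s+1)), cc ^ ((m+1) / Knb) := by
            rw [Finset.mul_sum]
            exact Finset.sum_congr rfl fun m _ => by ring
      _ ≤ b s * ES s * Sc := by
            apply mul_le_mul_of_nonneg_left _ (mul_nonneg (hbpos s).le (hES0 s))
            exact Summable.sum_le_tsum _ (fun m _ => by positivity) hgeo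
    calc ∑ s ∈ Finset.range T, ∑ t ∈ Finset.Ico (s+1) T,
        b t * (cc ^ ((t-s) / Knb) * ES s)
        ≤ ∑ s ∈ Finset.range T, b s * ES s * Sc := Finset.sum_le_sum hinner
    _ = (∑ s ∈ Finset.range T, b s * ES s) * Sc := (Finset.sum_mul _ _ _).symm
    _ ≤ Th * Sc := by
          apply mul_le_mul_of_nonneg_right _ hSc0
          exact Summable.sum_le_tsum _ (fun s _ => mul_nonneg (hbpos s).le (hES0 s)) HESb
  calc ∑ t ∈ Finset.range T, b t * ‖z (t+1) i - xbar t‖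
      ≤ dl⁻¹ * ((∑ t ∈ Finset.range T, b t * (cc ^ ((t+1) / Knb) * U0))
        + ∑ t ∈ Finset.range T, ∑ s ∈ Finset.range t,
            b t * (cc ^ ((t-s) / Knb) * ES s)) := step1
  _ ≤ dl⁻¹ * (b 0 * U0 * Sc + Th * Sc) :=
      mul_le_mul_of_nonneg_left (add_le_add step2 step3) (by positivity)
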